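/- Let f : X → Y be a local homeomorphism between topological spaces, where X is nonempty and path-connected and Y is simply connected. Suppose f has the unique path lifting property: for every continuous path γ : [0,1] → Y and every x₀ ∈ X with f(x₀) = γ(0), there exists exactly one continuous path γ̃ : [0,1] → X with γ̃(0) = x₀ and f ∘ γ̃ = γ. Then f is a homeomorphism of X onto Y. -/

import Mathlib

open unitInterval Set

section helpers

variable {X Y : Type*} [TopologicalSpace X] [TopologicalSpace Y]
  {f : X → Y}

/-- affine path in I from τ₀ to τ -/
noncomputable def seg (τ₀ τ : I) : I → I := fun x =>
  ⟨(1 - (x:ℝ)) * τ₀ + x * τ, by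
    constructor
    · nlinarith [x.2.1, x.2.2, τ₀.2.1, τ.2.1]
    · nlinarith [x.2.1, x.2.2, τ₀.2.2, τ.2.2]⟩

theorem seg_continuous (τ₀ τ : I) : Continuous (seg τ₀ τ) := by
  apply Continuous.subtype_mk
  fun_prop

@[simp] theorem seg_zero (τ₀ τ : I) : seg τ₀ τ 0 = τ₀ := by
  simp [seg]

@[simp] theorem seg_one (τ₀ τ : I) : seg τ₀ τ 1 = τ := by
  simp [seg]


/-- clamp t into [t₀-d, t₀+d] (and into [0,1]) -/
noncomputable def tclamp (t₀ : I) (d : ℝ) (t : I) : I :=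
  Set.projIcc (0:ℝ) 1 zero_le_one (max ((t₀:ℝ) - d) (min ((t₀:ℝ) + d) t))

theorem tclamp_continuous (t₀ : I) (d : ℝ) : Continuous (tclamp t₀ d) := by
  unfold tclamp
  exact continuous_projIcc.comp (by fun_prop)

theorem tclamp_mem {t₀ : I} {d : ℝ} (hd : 0 ≤ d) (t : I) :
    (max ((t₀:ℝ) - d) (min ((t₀:ℝ) + d) t)) ∈ Set.Icc (0:ℝ) 1 := by
  constructor
  · refine le_max_of_le_right (le_min (by linarith [t₀.2.1]) t.2.1)
  · exact max_le (by linarith [t₀.2.2]) (min_le_of_right_le t.2.2)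

theorem tclamp_dist {t₀ : I} {d : ℝ} (hd : 0 ≤ d) (t : I) :
    dist (tclamp t₀ d t) t₀ ≤ d := by
  rw [Subtype.dist_eq, Real.dist_eq, abs_le]
  unfold tclamp
  rw [Set.projIcc_of_mem _ (tclamp_mem hd t)]
  constructor
  · have : (t₀:ℝ) - d ≤ max ((t₀:ℝ) - d) (min ((t₀:ℝ) + d) t) := le_max_left _ _
    linarith
  · have : max ((t₀:ℝ) - d) (min ((t₀:ℝ) + d) t) ≤ (t₀:ℝ) + d :=
      max_le (by linarith) (min_le_left _ _)
    linarith

theorem tclamp_eq {t₀ : I} {d : ℝ} (t : I) (h : dist t t₀ ≤ d) :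
    tclamp t₀ d t = t := by
  rw [Subtype.dist_eq, Real.dist_eq, abs_le] at h
  have h1 : min ((t₀:ℝ) + d) t = t := min_eq_right (by linarith [h.2])
  have h2 : max ((t₀:ℝ) - d) (t:ℝ) = t := max_eq_right (by linarith [h.1])
  unfold tclamp
  rw [h1, h2, Set.projIcc_of_mem _ t.2]

theorem tclamp_self {t₀ : I} {d : ℝ} (hd : 0 ≤ d) : tclamp t₀ d t₀ = t₀ :=
  tclamp_eq t₀ (by simpa [dist_self] using hd)

/-- clamp u into [c, d] ⊆ I -/
noncomputable def uclamp (c d u : I) : I :=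
  ⟨max (c:ℝ) (min d u), ⟨le_max_of_le_left c.2.1,
    max_le c.2.2 (min_le_of_left_le d.2.2)⟩⟩

theorem uclamp_continuous (c d : I) : Continuous (uclamp c d) := by
  apply Continuous.subtype_mk
  fun_prop

theorem uclamp_mem {c d : I} (h : c ≤ d) (u : I) : uclamp c d u ∈ Set.Icc c d := by
  constructor
  · exact Subtype.mk_le_mk.mpr (le_max_left _ _)
  · exact Subtype.mk_le_mk.mpr (max_le h (min_le_left _ _))

theorem uclamp_eq {c d u : I} (h : u ∈ Set.Icc c d) : uclamp c d u = u := by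
  obtain ⟨h1, h2⟩ := h
  apply Subtype.ext
  show max (c:ℝ) (min d u) = u
  rw [min_eq_right (Subtype.coe_le_coe.mpr h2), max_eq_right (Subtype.coe_le_coe.mpr h1)]

variable (hlift : ∀ γ : unitInterval → Y, Continuous γ → ∀ x₀ : X, f x₀ = γ 0 →
    ∃! γl : unitInterval → X, Continuous γl ∧ γl 0 = x₀ ∧ f ∘ γl = γ)

include hlift

/-- uniqueness of lifts with same start point -/
theorem lift_unique_start (γ : I → Y) (hγ : Continuous γ) (g₁ g₂ : I → X)
    (hc₁ : Continuous g₁) (hc₂ : Continuous g₂)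
    (hl₁ : f ∘ g₁ = γ) (hl₂ : f ∘ g₂ = γ) (h0 : g₁ 0 = g₂ 0) : g₁ = g₂ := by
  obtain ⟨g, _, hu⟩ := hlift γ hγ (g₁ 0) (congrFun hl₁ 0)
  have e1 := hu g₁ ⟨hc₁, rfl, hl₁⟩
  have e2 := hu g₂ ⟨hc₂, h0.symm, hl₂⟩
  rw [e1, e2]

/-- uniqueness of lifts agreeing at any point -/
theorem lift_unique_at (γ : I → Y) (hγ : Continuous γ) (g₁ g₂ : I → X)
    (hc₁ : Continuous g₁) (hc₂ : Continuous g₂)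
    (hl₁ : ∀ t, f (g₁ t) = γ t) (hl₂ : ∀ t, f (g₂ t) = γ t) (τ₀ : I)
    (h0 : g₁ τ₀ = g₂ τ₀) : ∀ τ, g₁ τ = g₂ τ := by
  intro τ
  have key := lift_unique_start hlift (γ ∘ seg τ₀ τ) (hγ.comp (seg_continuous τ₀ τ))
    (g₁ ∘ seg τ₀ τ) (g₂ ∘ seg τ₀ τ)
    (hc₁.comp (seg_continuous τ₀ τ)) (hc₂.comp (seg_continuous τ₀ τ))
    (by funext x; exact hl₁ _) (by funext x; exact hl₂ _)
    (by simp [Function.comp, h0])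
  have := congrFun key 1
  simpa using this

variable (hf : IsLocalHomeomorph f)
include hf

omit hlift in
/-- a continuous map into X whose composition with f is constant is constant
(fibers of a local homeomorphism are discrete) -/
theorem const_of_comp_const {Z : Type} [TopologicalSpace Z] [PreconnectedSpace Z]
    (g : Z → X) (hg : Continuous g) (c : Y) (hfg : ∀ z, f (g z) = c) (z z' : Z) :
    g z = g z' := by
  have : IsLocallyConstant g := by
    rw [IsLocallyConstant.iff_exists_open]
    intro z
    obtain ⟨e, hze, hfe⟩ := hf (g z)
    refine ⟨g ⁻¹' e.source, e.open_source.preimage hg, hze, fun z' hz' => ?_⟩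
    have : e (g z') = e (g z) := by
      rw [← hfe]; rw [hfg z', hfg z]
    exact e.injOn hz' hze this
  exact this.apply_eq_of_preconnectedSpace z z'

omit hf

/-- existence part: the chosen lift -/
theorem exists_lift (γ : I → Y) (hγ : Continuous γ) (x₀ : X) (h : f x₀ = γ 0) :
    ∃ g : I → X, Continuous g ∧ g 0 = x₀ ∧ f ∘ g = γ :=
  ((hlift γ hγ x₀ h).exists).imp fun _ h => h

include hf

/-- The key continuity statement: lifting a homotopy pointwise in the second variable
yields a continuous endpoint function. -/
theorem endpoint_continuous (H : I × I → Y) (hH : Continuous H) (a : X)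
    (ha : ∀ t, H (0, t) = f a) (L : I → I → X)
    (hLc : ∀ t, Continuous (L t)) (hL0 : ∀ t, L t 0 = a)
    (hLf : ∀ t, f ∘ L t = fun s => H (s, t)) :
    Continuous fun t => L t 1 := by
  rw [continuous_iff_continuousAt]
  intro t₀
  set p : I → X := L t₀ with hp
  -- charts
  choose e he hfe using hf
  -- the open cover of I × {t₀}
  set O : I → Set (I × I) :=
    fun s => ((fun ut : I × I => p ut.1) ⁻¹' (e (p s)).source) ∩
      (H ⁻¹' (e (p s)).target) with hO
  have hOopen : ∀ s, IsOpen (O s) :=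
    fun s => (((e (p s)).open_source.preimage ((hLc t₀).comp continuous_fst)).inter
      ((e (p s)).open_target.preimage hH))
  have hmemO : ∀ s t, p s ∈ (e (p s)).source → H (s, t) = f (p s) → (s, t) ∈ O s := by
    intro s t h1 h2
    exact ⟨h1, by simp only [mem_preimage, h2, hfe (p s)]; exact (e (p s)).map_source h1⟩
  have hfp : ∀ s, f (p s) = H (s, t₀) := fun s => congrFun (hLf t₀) s
  have hcover : (univ : Set I) ×ˢ ({t₀} : Set I) ⊆ ⋃ s, O s := by
    rintro ⟨u, t⟩ ⟨-, ht⟩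
    simp only [mem_singleton_iff] at ht
    rw [ht]
    exact mem_iUnion.2 ⟨u, hmemO u t₀ (he (p u)) (hfp u).symm⟩
  obtain ⟨δ, hδ, hball⟩ := lebesgue_number_lemma_of_metric
    (isCompact_univ.prod isCompact_singleton) hOopen hcover
  -- choose n with 1/n < δ
  obtain ⟨n, hn⟩ := exists_nat_one_div_lt hδ
  -- grid points
  set sk : ℕ → I := fun k => Set.projIcc (0:ℝ) 1 zero_le_one (k / (n+1)) with hsk
  have hsk0 : sk 0 = 0 := by simp [hsk]
  have hskmono : Monotone sk := fun i j hij =>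
    Set.monotone_projIcc _ (by
      apply div_le_div_of_nonneg_right ?_ ?_ <;> [exact_mod_cast hij; positivity])
  have hsk_lip : ∀ k : ℕ, (sk (k+1) : ℝ) - sk k ≤ 1 / (n+1) := by
    intro k
    have h1 := (LipschitzWith.projIcc (zero_le_one' ℝ)).dist_le_mul
      (((k:ℝ)+1) / (n+1)) ((k:ℝ) / (n+1))
    rw [Subtype.dist_eq] at h1
    have h2 : dist (((k:ℝ)+1) / (n+1)) ((k:ℝ) / (n+1)) = 1 / (n+1) := by
      rw [Real.dist_eq]
      have h5 : ((k:ℝ)+1) / (n+1) - (k:ℝ)/(n+1) = 1/(n+1) := by ring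
      rw [h5, abs_of_nonneg (by positivity)]
    rw [h2] at h1
    rw [Real.dist_eq] at h1
    calc (sk (k+1) : ℝ) - sk k ≤ |(sk (k+1) : ℝ) - sk k| := le_abs_self _
      _ ≤ 1 / (n+1) := by rw [hsk]; push_cast at h1 ⊢; simpa using h1
  have hskl : sk (n+1) = 1 := by
    simp [hsk, div_self (by positivity : ((n:ℝ)+1) ≠ 0)]
  -- strip selection
  have strip : ∀ k : ℕ, ∃ E : OpenPartialHomeomorph X Y, f = ⇑E ∧
      ∀ u t, u ∈ Set.Icc (sk k) (sk (k+1)) → dist t t₀ ≤ δ/2 →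
        p u ∈ E.source ∧ H (u, t) ∈ E.target := by
    intro k
    obtain ⟨s, hs⟩ := hball (sk k, t₀) (by exact ⟨trivial, rfl⟩)
    refine ⟨e (p s), hfe (p s), fun u t hu ht => ?_⟩
    have hmem : (u, t) ∈ Metric.ball (sk k, t₀) δ := by
      rw [Metric.mem_ball, Prod.dist_eq]
      apply max_lt
      · rw [Subtype.dist_eq, Real.dist_eq]
        have h1 : (sk k : ℝ) ≤ u := Subtype.coe_le_coe.mpr hu.1
        have h2 : (u : ℝ) ≤ sk (k+1) := Subtype.coe_le_coe.mpr hu.2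
        show |(u:ℝ) - (sk k : ℝ)| < δ
        rw [abs_of_nonneg (by linarith)]
        linarith [hsk_lip k]
      · exact lt_of_le_of_lt ht (by linarith)
    exact hs hmem
  choose E hEf hE using strip
  -- the clamp in t
  set χ : I → I := tclamp t₀ (δ/2) with hχ
  have hδ2 : (0:ℝ) ≤ δ/2 := by linarith
  have hχd : ∀ t, dist (χ t) t₀ ≤ δ/2 := fun t => tclamp_dist hδ2 t
  have hχt₀ : χ t₀ = t₀ := tclamp_self hδ2
  have hpmem : ∀ k (u : I), u ∈ Set.Icc (sk k) (sk (k+1)) → p u ∈ (E k).source :=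
    fun k u hu => (hE k u t₀ hu (by simp [dist_self]; linarith)).1
  have hHmem : ∀ k (u t : I), u ∈ Set.Icc (sk k) (sk (k+1)) →
      H (u, χ t) ∈ (E k).target :=
    fun k u t hu => (hE k u (χ t) hu (hχd t)).2
  have hfpE : ∀ k (u : I), u ∈ Set.Icc (sk k) (sk (k+1)) →
      (E k).symm (H (u, t₀)) = p u := by
    intro k u hu
    rw [← hfp u, hEf k]
    exact (E k).left_inv (hpmem k u hu)
  -- inductive construction of partial lifts of the homotopy
  have build : ∀ k : ℕ, ∃ K : I × I → X, Continuous K ∧ (∀ t, K (0, t) = a) ∧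
      (∀ u t, u ≤ sk k → f (K (u, t)) = H (u, χ t)) ∧
      (∀ u, u ≤ sk k → K (u, t₀) = p u) := by
    intro k
    induction k with
    | zero =>
      refine ⟨fun _ => a, continuous_const, fun t => rfl, ?_, ?_⟩
      · intro u t hu
        have : u = 0 := le_antisymm (hsk0 ▸ hu) unitInterval.nonneg'
        rw [this, ha (χ t)]
      · intro u hu
        have : u = 0 := le_antisymm (hsk0 ▸ hu) unitInterval.nonneg'
        rw [this, ← hL0 t₀]
    | succ k ih =>
      obtain ⟨K, hKc, hK0, hKf, hKt₀⟩ := ih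
      have hsk_le : sk k ≤ sk (k+1) := hskmono (Nat.le_succ k)
      set g₂ : I × I → X :=
        fun ut => (E k).symm (H (uclamp (sk k) (sk (k+1)) ut.1, χ ut.2)) with hg₂
      have hg₂c : Continuous g₂ := by
        apply (E k).continuousOn_symm.comp_continuous
        · exact hH.comp (((uclamp_continuous _ _).comp continuous_fst).prodMk
            ((tclamp_continuous _ _).comp continuous_snd))
        · exact fun ut => hHmem k _ _ (uclamp_mem hsk_le ut.1)
      have hfg₂ : ∀ u t, u ∈ Set.Icc (sk k) (sk (k+1)) →
          f (g₂ (u, t)) = H (u, χ t) := by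
        intro u t hu
        rw [hg₂]
        simp only
        rw [uclamp_eq hu, hEf k]
        exact (E k).right_inv (hHmem k u t hu)
      have hg₂t₀ : ∀ u, u ∈ Set.Icc (sk k) (sk (k+1)) → g₂ (u, t₀) = p u := by
        intro u hu
        rw [hg₂]
        simp only
        rw [uclamp_eq hu, hχt₀]
        exact hfpE k u hu
      have hskkmem : sk k ∈ Set.Icc (sk k) (sk (k+1)) := ⟨le_refl _, hsk_le⟩
      -- matching on the common boundary
      have hmatch : ∀ t, K (sk k, t) = g₂ (sk k, t) :=
        lift_unique_at hlift (fun t => H (sk k, χ t))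
          (by exact hH.comp (continuous_const.prodMk (tclamp_continuous _ _)))
          (fun t => K (sk k, t)) (fun t => g₂ (sk k, t))
          (by exact hKc.comp (continuous_const.prodMk continuous_id))
          (by exact hg₂c.comp (continuous_const.prodMk continuous_id))
          (fun t => hKf (sk k) t (le_refl _)) (fun t => hfg₂ (sk k) t hskkmem) t₀
          (by show K (sk k, t₀) = g₂ (sk k, t₀)
              rw [hKt₀ (sk k) (le_refl _), hg₂t₀ (sk k) hskkmem])
      classical
      refine ⟨fun ut => if (ut.1 : ℝ) ≤ (sk k : ℝ) then K ut else g₂ ut,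
        ?_, ?_, ?_, ?_⟩
      · apply Continuous.if_le hKc hg₂c
          (continuous_subtype_val.comp continuous_fst) continuous_const
        intro ut h
        have : ut.1 = sk k := Subtype.ext h
        calc K ut = K (sk k, ut.2) := by rw [← this]
          _ = g₂ (sk k, ut.2) := hmatch ut.2
          _ = g₂ ut := by rw [← this]
      · intro t
        simp only
        rw [if_pos (by exact_mod_cast unitInterval.nonneg' : ((0:I):ℝ) ≤ (sk k : ℝ))]
        exact hK0 t
      · intro u t hu
        simp only
        by_cases h : (u : ℝ) ≤ (sk k : ℝ)
        · rw [if_pos h]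
          exact hKf u t (Subtype.coe_le_coe.mp h)
        · rw [if_neg h]
          exact hfg₂ u t ⟨le_of_lt (Subtype.coe_lt_coe.mp (not_le.mp h)), hu⟩
      · intro u hu
        simp only
        by_cases h : (u : ℝ) ≤ (sk k : ℝ)
        · rw [if_pos h]
          exact hKt₀ u (Subtype.coe_le_coe.mp h)
        · rw [if_neg h]
          exact hg₂t₀ u ⟨le_of_lt (Subtype.coe_lt_coe.mp (not_le.mp h)), hu⟩
  -- extract the full lift
  obtain ⟨K, hKc, hK0, hKf, hKt₀⟩ := build (n+1)
  rw [hskl] at hKf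
  -- identify L t with K (·, t) for t near t₀
  have hLK : ∀ t : I, dist t t₀ ≤ δ/2 → L t = fun s => K (s, t) := by
    intro t ht
    have hχeq : χ t = t := tclamp_eq t ht
    apply lift_unique_start hlift (fun s => H (s, t))
      (by exact hH.comp (continuous_id.prodMk continuous_const))
      (L t) (fun s => K (s, t)) (hLc t)
      (by exact hKc.comp (continuous_id.prodMk continuous_const))
      (hLf t)
    · funext s
      show f (K (s, t)) = H (s, t)
      rw [hKf s t unitInterval.le_one', hχeq]
    · show L t 0 = K (0, t)
      rw [hL0 t, hK0 t]
  have hKcont : Continuous fun t => K (1, t) :=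
    hKc.comp (continuous_const.prodMk continuous_id)
  apply hKcont.continuousAt.congr
  have hnhds : Metric.ball t₀ (δ/2) ∈ nhds t₀ :=
    Metric.ball_mem_nhds t₀ (by linarith)
  apply Filter.eventuallyEq_of_mem hnhds
  intro t ht
  simp only
  rw [hLK t (le_of_lt (Metric.mem_ball.mp ht))]

end helpers

/-- A local homeomorphism with the unique path lifting property from a nonempty
path-connected space to a simply connected space is a homeomorphism. -/
theorem localHomeomorph_unique_path_lifting_is_homeomorph
    {X Y : Type*} [TopologicalSpace X] [TopologicalSpace Y]
    [Nonempty X] [PathConnectedSpace X] [SimplyConnectedSpace Y]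
    (f : X → Y) (hf : IsLocalHomeomorph f)
    (hlift : ∀ γ : unitInterval → Y, Continuous γ → ∀ x₀ : X, f x₀ = γ 0 →
      ∃! γl : unitInterval → X, Continuous γl ∧ γl 0 = x₀ ∧ f ∘ γl = γ) :
    ∃ h : X ≃ₜ Y, ⇑h = f := by
  classical
  have hsurj : Function.Surjective f := by
    intro y
    set a : X := Classical.arbitrary X
    set γ : Path (f a) y := PathConnectedSpace.somePath (f a) y
    obtain ⟨g, hgc, hg0, hgf⟩ := exists_lift hlift γ γ.continuous a γ.source.symm
    exact ⟨g 1, by rw [← γ.target]; exact congrFun hgf 1⟩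
  have hinj : Function.Injective f := by
    intro b c hbc
    obtain ⟨q⟩ := PathConnectedSpace.joined b c
    set γ : Path (f b) (f b) := (q.map hf.continuous).cast rfl hbc
    obtain ⟨F⟩ := SimplyConnectedSpace.paths_homotopic γ (Path.refl (f b))
    set H : unitInterval × unitInterval → Y := fun st => F (st.2, st.1) with hHdef
    have hH : Continuous H := F.continuous.comp (continuous_snd.prodMk continuous_fst)
    have ha0 : ∀ t, H (0, t) = f b := fun t => F.source t
    have ha1 : ∀ t, H (1, t) = f b := fun t => F.target t
    have hex : ∀ t, ∃ g : unitInterval → X,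
        Continuous g ∧ g 0 = b ∧ f ∘ g = fun s => H (s, t) := by
      intro t
      exact exists_lift hlift (fun s => H (s, t))
        (hH.comp (continuous_id.prodMk continuous_const)) b (ha0 t).symm
    choose L hLc hL0 hLf using hex
    have hcont : Continuous fun t => L t 1 :=
      endpoint_continuous hlift hf H hH b ha0 L hLc hL0 hLf
    have hconst : ∀ t, f (L t 1) = f b := fun t =>
      (congrFun (hLf t) 1).trans (ha1 t)
    have heq : L 0 1 = L 1 1 :=
      const_of_comp_const hf (fun t => L t 1) hcont (f b) hconst 0 1
    have hL0q : L 0 = fun s => q s := by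
      apply lift_unique_start hlift (fun s => H (s, 0))
        (hH.comp (continuous_id.prodMk continuous_const))
        (L 0) (fun s => q s) (hLc 0) q.continuous (hLf 0)
      · funext s
        show f (q s) = H (s, 0)
        have h1 : H (s, 0) = γ s := F.apply_zero s
        rw [h1]
        show f (q s) = ((q.map hf.continuous).cast rfl hbc) s
        simp [Path.cast_coe, Path.map_coe]
      · show L 0 0 = q 0
        rw [hL0 0, q.source]
    have hL1c : L 1 = fun _ => b := by
      apply lift_unique_start hlift (fun s => H (s, 1))
        (hH.comp (continuous_id.prodMk continuous_const))
        (L 1) (fun _ => b) (hLc 1) continuous_const (hLf 1)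
      · funext s
        show f b = H (s, 1)
        have h1 : H (s, 1) = Path.refl (f b) s := F.apply_one s
        rw [h1, Path.refl_apply]
      · show L 1 0 = b
        exact hL0 1
    rw [hL0q, hL1c] at heq
    simp only at heq
    rw [q.target] at heq
    exact heq.symm
  exact ⟨Equiv.toHomeomorphOfContinuousOpen (Equiv.ofBijective f ⟨hinj, hsurj⟩)
    hf.continuous hf.isOpenMap, rfl⟩
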